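/- Let (V,E,μ) be an infinite, connected, locally finite weighted graph, 1 < p < ∞, and y ∈ V. Let Ω ⊆ Ω′ be finite subsets of V containing y, and let g_Ω(·,y) and g_{Ω′}(·,y) be local p-Green functions of Ω and Ω′ with pole at y. Then g_Ω(x,y) ≤ g_{Ω′}(x,y) for all x ∈ V. In particular, for balls B_R centered at a fixed vertex o, the local Green functions g_R(x,y) = g_{B_R}(x,y) are nondecreasing in R. -/

import Mathlib

open scoped BigOperators ENNReal

/-- `Φ_p(t) = |t|^{p-2} t`. -/
noncomputable def Phi (p t : ℝ) : ℝ := |t| ^ (p - 2) * t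

/-- Vertex measure `μ(x) = ∑_{y ~ x} μ_{xy}`. -/
noncomputable def vMeas {V : Type*} (G : SimpleGraph V) (w : V → V → ℝ) (x : V) : ℝ :=
  ∑ᶠ y ∈ {y | G.Adj x y}, w x y

/-- The `p`-Laplacian `Δ_p u(x) = μ(x)⁻¹ ∑_{y ~ x} μ_{xy} Φ_p(u(y) - u(x))`. -/
noncomputable def pLap {V : Type*} (G : SimpleGraph V) (w : V → V → ℝ) (p : ℝ)
    (u : V → ℝ) (x : V) : ℝ :=
  (vMeas G w x)⁻¹ * ∑ᶠ y ∈ {y | G.Adj x y}, w x y * Phi p (u y - u x)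

/-- The ball `B_R = {x : d(o,x) ≤ R}` with respect to the graph distance. -/
def ballSet {V : Type*} (G : SimpleGraph V) (o : V) (R : ℕ) : Set V :=
  {x | G.dist o x ≤ R}

/-- `g` is a local `p`-Green function of `Ω` with pole at `y`. -/
def IsGreen {V : Type*} (G : SimpleGraph V) (w : V → V → ℝ) (p : ℝ)
    (Ω : Set V) (y : V) (g : V → ℝ) : Prop :=
  (∀ x ∉ Ω, g x = 0) ∧ (∀ x ∈ Ω, x ≠ y → -pLap G w p g x = 0) ∧
    -pLap G w p g y = (vMeas G w y)⁻¹

/- ## Auxiliary lemmas about `Phi` -/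

lemma phi_zero (p : ℝ) : Phi p 0 = 0 := by simp [Phi]

lemma phi_neg (p t : ℝ) : Phi p (-t) = -Phi p t := by
  simp [Phi, abs_neg, mul_neg]

lemma phi_pos {p t : ℝ} (ht : 0 < t) : 0 < Phi p t :=
  mul_pos (Real.rpow_pos_of_pos (abs_pos.mpr ht.ne') _) ht

lemma phi_eq_rpow {p c : ℝ} (hc : 0 < c) : Phi p c = c ^ (p - 1) := by
  unfold Phi
  rw [abs_of_pos hc, show p - 1 = p - 2 + 1 by ring, Real.rpow_add_one hc.ne']

lemma phi_lt_of_nonneg {p a b : ℝ} (hp : 1 < p) (ha : 0 ≤ a) (hab : a < b) :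
    Phi p a < Phi p b := by
  rcases ha.eq_or_lt with h | h
  · rw [← h, phi_zero]; exact phi_pos (h ▸ hab)
  · rw [phi_eq_rpow h, phi_eq_rpow (h.trans hab)]
    exact Real.rpow_lt_rpow h.le hab (by linarith)

lemma phi_strictMono {p : ℝ} (hp : 1 < p) : StrictMono (Phi p) := by
  intro s t hst
  rcases le_or_gt 0 s with hs | hs
  · exact phi_lt_of_nonneg hp hs hst
  · rcases lt_or_ge 0 t with ht | ht
    · have h1 : Phi p s < 0 := by
        have := phi_pos (p := p) (t := -s) (by linarith)
        rw [phi_neg] at this; linarith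
      exact h1.trans (phi_pos ht)
    · have := phi_lt_of_nonneg hp (a := -t) (b := -s) (p := p)
        (by linarith) (by linarith)
      rw [phi_neg, phi_neg] at this; linarith

lemma phi_nonneg {p t : ℝ} (hp : 1 < p) (ht : 0 ≤ t) : 0 ≤ Phi p t := by
  rcases ht.eq_or_lt with h | h
  · rw [← h, phi_zero]
  · exact (phi_pos h).le

/- ## Auxiliary graph lemmas -/

lemma finsum_adj {V : Type*} {G : SimpleGraph V}
    (hlf : ∀ x : V, {y | G.Adj x y}.Finite) (f : V → ℝ) (x : V) :
    ∑ᶠ z ∈ {z | G.Adj x z}, f z = ∑ z ∈ (hlf x).toFinset, f z :=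
  finsum_mem_eq_finite_toFinset_sum f (hlf x)

lemma exists_adj {V : Type*} [Infinite V] {G : SimpleGraph V}
    (hconn : G.Connected) (x : V) : ∃ z, G.Adj x z := by
  obtain ⟨z, hz⟩ := exists_ne x
  obtain ⟨pw⟩ := hconn.preconnected x z
  exact ⟨_, pw.adj_snd (SimpleGraph.Walk.not_nil_of_ne (Ne.symm hz))⟩

lemma vMeas_pos {V : Type*} [Infinite V] {G : SimpleGraph V}
    (hconn : G.Connected) (hlf : ∀ x : V, {y | G.Adj x y}.Finite)
    {w : V → V → ℝ} (hwpos : ∀ x y, G.Adj x y → 0 < w x y) (x : V) :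
    0 < vMeas G w x := by
  rw [vMeas, finsum_adj hlf]
  apply Finset.sum_pos
  · intro z hz
    exact hwpos x z ((hlf x).mem_toFinset.mp hz)
  · obtain ⟨z, hz⟩ := exists_adj hconn x
    exact ⟨z, (hlf x).mem_toFinset.mpr hz⟩

lemma pLap_eq {V : Type*} {G : SimpleGraph V}
    (hlf : ∀ x : V, {y | G.Adj x y}.Finite) {w : V → V → ℝ} {p : ℝ}
    (u : V → ℝ) (x : V) :
    pLap G w p u x = (vMeas G w x)⁻¹ *
      ∑ z ∈ (hlf x).toFinset, w x z * Phi p (u z - u x) := by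
  rw [pLap, finsum_adj hlf]

/-- The local sum is zero at interior non-pole points. -/
lemma green_sum_zero {V : Type*} [Infinite V] {G : SimpleGraph V}
    (hconn : G.Connected) (hlf : ∀ x : V, {y | G.Adj x y}.Finite)
    {w : V → V → ℝ} (hwpos : ∀ x y, G.Adj x y → 0 < w x y)
    {p : ℝ} {Ω : Set V} {y : V} {g : V → ℝ}
    (hg : IsGreen G w p Ω y g) {x : V} (hx : x ∈ Ω) (hxy : x ≠ y) :
    ∑ z ∈ (hlf x).toFinset, w x z * Phi p (g z - g x) = 0 := by
  have h := hg.2.1 x hx hxy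
  rw [neg_eq_zero, pLap_eq hlf] at h
  have hv := (vMeas_pos hconn hlf hwpos x).ne'
  exact (mul_eq_zero.mp h).resolve_left (inv_ne_zero hv)

/-- The local sum is `-1` at the pole. -/
lemma green_sum_pole {V : Type*} [Infinite V] {G : SimpleGraph V}
    (hconn : G.Connected) (hlf : ∀ x : V, {y | G.Adj x y}.Finite)
    {w : V → V → ℝ} (hwpos : ∀ x y, G.Adj x y → 0 < w x y)
    {p : ℝ} {Ω : Set V} {y : V} {g : V → ℝ}
    (hg : IsGreen G w p Ω y g) :
    ∑ z ∈ (hlf y).toFinset, w y z * Phi p (g z - g y) = -1 := by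
  have h := hg.2.2
  rw [pLap_eq hlf] at h
  have hv := (vMeas_pos hconn hlf hwpos y).ne'
  field_simp at h
  have h2 : (∑ z ∈ (hlf y).toFinset, w y z * Phi p (g z - g y)) * vMeas G w y
      = (-1) * vMeas G w y := by
    have h3 : (∑ z ∈ (hlf y).toFinset, w y z * Phi p (g z - g y)) = -1 := (by linarith); rw [h3]
  exact mul_right_cancel₀ hv h2

lemma walk_closed {V : Type*} {G : SimpleGraph V} {A : Set V}
    (hA : ∀ x ∈ A, ∀ z, G.Adj x z → z ∈ A)
    {u v : V} (q : G.Walk u v) (hu : u ∈ A) : v ∈ A := by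
  induction q with
  | nil => exact hu
  | cons h q ih => exact ih (hA _ hu _ h)

/-- Minimum principle: any local Green function is nonnegative. -/
lemma green_nonneg {V : Type*} [Infinite V] {G : SimpleGraph V}
    (hconn : G.Connected) (hlf : ∀ x : V, {y | G.Adj x y}.Finite)
    {w : V → V → ℝ} (hwpos : ∀ x y, G.Adj x y → 0 < w x y)
    {p : ℝ} (hp : 1 < p) {Ω : Set V} (hΩ : Ω.Finite) {y : V} (hy : y ∈ Ω)
    {g : V → ℝ} (hg : IsGreen G w p Ω y g) : ∀ x, 0 ≤ g x := by
  by_contra hcon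
  push_neg at hcon
  obtain ⟨x0, hx0⟩ := hcon
  have hTne : hΩ.toFinset.Nonempty := ⟨y, hΩ.mem_toFinset.mpr hy⟩
  set m : ℝ := hΩ.toFinset.inf' hTne g with hm
  have hx0Ω : x0 ∈ Ω := by
    by_contra h; rw [hg.1 x0 h] at hx0; linarith
  have hmneg : m < 0 :=
    lt_of_le_of_lt (Finset.inf'_le g (hΩ.mem_toFinset.mpr hx0Ω)) hx0
  have hm_le : ∀ z, m ≤ g z := by
    intro z
    by_cases hz : z ∈ Ω
    · exact Finset.inf'_le g (hΩ.mem_toFinset.mpr hz)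
    · rw [hg.1 z hz]; exact hmneg.le
  set A : Set V := {x | g x = m} with hA
  have hAΩ : A ⊆ Ω := by
    intro x hx
    have hxm : g x = m := hx
    by_contra h
    rw [hg.1 x h] at hxm
    exact hmneg.ne' hxm
  have hyA : y ∉ A := by
    intro hyA
    have hym : g y = m := hyA
    have hsum := green_sum_pole hconn hlf hwpos hg
    have hnn : ∀ z ∈ (hlf y).toFinset, 0 ≤ w y z * Phi p (g z - g y) := by
      intro z hz
      exact mul_nonneg (hwpos y z ((hlf y).mem_toFinset.mp hz)).le
        (phi_nonneg hp (by have := hm_le z; rw [hym]; linarith))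
    have : (0:ℝ) ≤ -1 := hsum ▸ Finset.sum_nonneg hnn
    linarith
  have hclosed : ∀ x ∈ A, ∀ z, G.Adj x z → z ∈ A := by
    intro x hx z hzadj
    have hxm : g x = m := hx
    have hxy : x ≠ y := fun h => hyA (h ▸ hx)
    have hsum := green_sum_zero hconn hlf hwpos hg (hAΩ hx) hxy
    have hnn : ∀ z' ∈ (hlf x).toFinset, 0 ≤ w x z' * Phi p (g z' - g x) := by
      intro z' hz'
      exact mul_nonneg (hwpos x z' ((hlf x).mem_toFinset.mp hz')).le
        (phi_nonneg hp (by have := hm_le z'; rw [hxm]; linarith))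
    have hall := (Finset.sum_eq_zero_iff_of_nonneg hnn).mp hsum
    have hzero := hall z ((hlf x).mem_toFinset.mpr hzadj)
    have hphi : Phi p (g z - g x) = 0 :=
      (mul_eq_zero.mp hzero).resolve_left (hwpos x z hzadj).ne'
    have harg : g z - g x = 0 :=
      (phi_strictMono hp).injective (hphi.trans (phi_zero p).symm)
    show g z = m
    linarith
  obtain ⟨xm, hxmT, hxm⟩ := Finset.exists_mem_eq_inf' hTne g
  have hxmA : xm ∈ A := hxm.symm
  obtain ⟨v, hv⟩ := hΩ.infinite_compl.nonempty
  obtain ⟨q⟩ := hconn.preconnected xm v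
  exact hv (hAΩ (walk_closed hclosed q hxmA))

/-- Comparison: a Green function on a smaller domain is dominated by one on a larger one. -/
lemma green_compare {V : Type*} [Infinite V] {G : SimpleGraph V}
    (hconn : G.Connected) (hlf : ∀ x : V, {y | G.Adj x y}.Finite)
    {w : V → V → ℝ} (hwpos : ∀ x y, G.Adj x y → 0 < w x y)
    {p : ℝ} (hp : 1 < p) {Ω Ω' : Set V} (hΩ : Ω.Finite) (hΩ' : Ω'.Finite)
    (hsub : Ω ⊆ Ω') {y : V} (hy : y ∈ Ω) {g g' : V → ℝ}
    (hg : IsGreen G w p Ω y g) (hg' : IsGreen G w p Ω' y g') :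
    ∀ x, g x ≤ g' x := by
  by_contra hcon
  push_neg at hcon
  obtain ⟨x0, hx0⟩ := hcon
  set f : V → ℝ := fun x => g x - g' x with hf
  have hfz : ∀ z ∉ Ω', f z = 0 := by
    intro z hz
    have h1 := hg.1 z (fun h => hz (hsub h))
    have h2 := hg'.1 z hz
    simp only [hf]; rw [h1, h2]; ring
  have hx0Ω' : x0 ∈ Ω' := by
    by_contra h
    have := hfz x0 h
    simp only [hf] at this
    linarith
  have hTne : hΩ'.toFinset.Nonempty := ⟨y, hΩ'.mem_toFinset.mpr (hsub hy)⟩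
  set M : ℝ := hΩ'.toFinset.sup' hTne f with hM
  have hMpos : 0 < M :=
    lt_of_lt_of_le (by simp only [hf]; linarith)
      (Finset.le_sup' f (hΩ'.mem_toFinset.mpr hx0Ω'))
  have hM_le : ∀ z, f z ≤ M := by
    intro z
    by_cases hz : z ∈ Ω'
    · exact Finset.le_sup' f (hΩ'.mem_toFinset.mpr hz)
    · rw [hfz z hz]; exact hMpos.le
  have hg'nn := green_nonneg hconn hlf hwpos hp hΩ' (hsub hy) hg'
  set A : Set V := {x | f x = M} with hA
  have hAΩ : A ⊆ Ω := by
    intro x hx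
    have hxM : g x - g' x = M := hx
    by_contra h
    have hgx0 : g x = 0 := hg.1 x h
    have := hg'nn x
    rw [hgx0] at hxM
    linarith
  have hclosed : ∀ x ∈ A, ∀ z, G.Adj x z → z ∈ A := by
    intro x hx z hzadj
    have hxΩ : x ∈ Ω := hAΩ hx
    have hxM : g x - g' x = M := hx
    have hsums : ∑ z' ∈ (hlf x).toFinset, w x z' * Phi p (g z' - g x)
        = ∑ z' ∈ (hlf x).toFinset, w x z' * Phi p (g' z' - g' x) := by
      by_cases hxy : x = y
      · subst hxy
        rw [green_sum_pole hconn hlf hwpos hg, green_sum_pole hconn hlf hwpos hg']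
      · rw [green_sum_zero hconn hlf hwpos hg hxΩ hxy,
          green_sum_zero hconn hlf hwpos hg' (hsub hxΩ) hxy]
    have hterm : ∀ z' ∈ (hlf x).toFinset,
        w x z' * Phi p (g z' - g x) ≤ w x z' * Phi p (g' z' - g' x) := by
      intro z' hz'
      have hfz' : g z' - g' z' ≤ M := hM_le z'
      have harg : g z' - g x ≤ g' z' - g' x := by linarith
      exact mul_le_mul_of_nonneg_left
        ((phi_strictMono hp).monotone harg)
        (hwpos x z' ((hlf x).mem_toFinset.mp hz')).le
    have hall := (Finset.sum_eq_sum_iff_of_le hterm).mp hsums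
    have heq := hall z ((hlf x).mem_toFinset.mpr hzadj)
    have hphi : Phi p (g z - g x) = Phi p (g' z - g' x) :=
      mul_left_cancel₀ (hwpos x z hzadj).ne' heq
    have harg := (phi_strictMono hp).injective hphi
    show g z - g' z = M
    linarith [sub_eq_sub_iff_sub_eq_sub.mp harg]
  obtain ⟨xm, hxmT, hxm⟩ := Finset.exists_mem_eq_sup' hTne f
  have hxmA : xm ∈ A := hxm.symm
  obtain ⟨v, hv⟩ := hΩ'.infinite_compl.nonempty
  obtain ⟨q⟩ := hconn.preconnected xm v
  have hvM : f v = M := walk_closed hclosed q hxmA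
  rw [hfz v hv] at hvM
  linarith

/-- Balls are finite in a locally finite connected graph. -/
lemma ball_finite {V : Type*} {G : SimpleGraph V}
    (hconn : G.Connected) (hlf : ∀ x : V, {y | G.Adj x y}.Finite)
    (o : V) (R : ℕ) : (ballSet G o R).Finite := by
  induction R with
  | zero =>
    apply Set.Finite.subset (Set.finite_singleton o)
    intro x hx
    have h0 : G.dist o x = 0 := Nat.le_zero.mp hx
    rcases SimpleGraph.dist_eq_zero_iff_eq_or_not_reachable.mp h0 with h | h
    · exact h ▸ rfl
    · exact absurd (hconn.preconnected o x) h
  | succ R ih =>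
    apply Set.Finite.subset (ih.union (ih.biUnion fun z _ => hlf z))
    intro x hx
    by_cases hxR : G.dist o x ≤ R
    · exact Or.inl hxR
    · right
      have hdist : G.dist o x = R + 1 :=
        le_antisymm hx (Nat.succ_le_of_lt (Nat.lt_of_not_le hxR))
      obtain ⟨pw, hlen⟩ := (hconn.preconnected o x).exists_walk_length_eq_dist
      set q := pw.reverse with hq
      have hqlen : q.length = R + 1 := by
        rw [hq, SimpleGraph.Walk.length_reverse, hlen, hdist]
      have hqnil : ¬ q.Nil := by
        intro h
        rw [SimpleGraph.Walk.nil_iff_length_eq.mp h] at hqlen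
        omega
      have hadj : G.Adj x (q.getVert 1) := q.adj_snd hqnil
      have htail : q.tail.length = R := by
        have := SimpleGraph.Walk.length_tail_add_one hqnil
        omega
      have hzball : G.dist o (q.getVert 1) ≤ R := by
        rw [SimpleGraph.dist_comm]
        calc G.dist (q.getVert 1) o ≤ q.tail.length := SimpleGraph.dist_le q.tail
          _ = R := htail
      exact Set.mem_biUnion hzball hadj.symm

/-- Monotonicity of local `p`-Green functions in the domain: if `Ω ⊆ Ω'` are finite sets
containing the pole `y`, then `g_Ω(·,y) ≤ g_{Ω'}(·,y)` pointwise; in particular, for balls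
`B_R` centered at a fixed vertex `o`, the local Green functions are nondecreasing in `R`. -/
theorem stmt15 {V : Type*} [Infinite V] (G : SimpleGraph V)
    (hconn : G.Connected) (hlf : ∀ x : V, {y | G.Adj x y}.Finite)
    (w : V → V → ℝ) (hwsymm : ∀ x y, w x y = w y x)
    (hwpos : ∀ x y, G.Adj x y → 0 < w x y)
    (p : ℝ) (hp : 1 < p) (y : V) :
    (∀ (Ω Ω' : Set V), Ω.Finite → Ω'.Finite → Ω ⊆ Ω' → y ∈ Ω →
      ∀ g g' : V → ℝ, IsGreen G w p Ω y g → IsGreen G w p Ω' y g' →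
        ∀ x, g x ≤ g' x) ∧
    (∀ (o : V) (R R' : ℕ), R ≤ R' → G.dist o y ≤ R →
      ∀ g g' : V → ℝ, IsGreen G w p (ballSet G o R) y g →
        IsGreen G w p (ballSet G o R') y g' →
        ∀ x, g x ≤ g' x) := by
  constructor
  · intro Ω Ω' hΩ hΩ' hsub hy g g' hg hg'
    exact green_compare hconn hlf hwpos hp hΩ hΩ' hsub hy hg hg'
  · intro o R R' hRR' hdy g g' hg hg'
    exact green_compare hconn hlf hwpos hp (ball_finite hconn hlf o R)
      (ball_finite hconn hlf o R') (fun x hx => le_trans hx hRR') hdy hg hg'
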